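/- Suppose X ⊆ ℓ∞ is a Banach space (a linear subspace of ℓ∞ that is complete in the supremum norm) and Y ⊆ X is analytic as a subset of ℝ^ℕ with its product topology. Then Y is dichotomous with respect to the distance d(y,y') = ‖y − y'‖∞. In particular, if X itself is analytic in ℝ^ℕ, then the unit sphere S_X is dichotomous. -/
import Mathlib


open scoped ENNReal

/-- `ℓ∞`: the Banach space of bounded real sequences with the sup norm. -/
abbrev Linfty : Type := lp (fun _ : ℕ => ℝ) ∞

/-- A subset `M` of a normed space is dichotomous if for every `r` with
`0 < r ≤ diam M`, either `M` admits an uncountable `(r+)`-separated subset,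
or `M` is the union of countably many sets each of diameter at most `r`. -/
def Dichotomous {X : Type*} [NormedAddCommGroup X] (M : Set X) : Prop :=
  ∀ r : ℝ, 0 < r → r ≤ Metric.diam M →
    (∃ N ⊆ M, ¬N.Countable ∧ ∀ x ∈ N, ∀ y ∈ N, x ≠ y → r < ‖x - y‖) ∨
    (∃ f : ℕ → Set X, (⋃ n, f n) = M ∧ ∀ n, Metric.diam (f n) ≤ r)

namespace Stmt12Aux

open Set PiNat

/-- `ℕ → Bool` is not countable. -/
lemma not_countable_funBool : ¬ Countable (ℕ → Bool) := by
  intro h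
  obtain ⟨f, hf⟩ := exists_surjective_nat (ℕ → Bool)
  obtain ⟨n, hn⟩ := hf (fun k => !(f k k))
  have := congrFun hn n
  simp at this

variable (r : ℝ) (g : (ℕ → ℕ) → (ℕ → ℝ))

/-- `S` is coverable: the `g`-image of `S` is covered by countably many sets which are
"small", i.e. all coordinates of differences are `≤ r`. -/
def Cov (S : Set (ℕ → ℕ)) : Prop :=
  ∃ F : ℕ → Set (ℕ → ℝ),
    (∀ k, ∀ a ∈ F k, ∀ b ∈ F k, ∀ n, |a n - b n| ≤ r) ∧ ∀ p ∈ S, ∃ k, g p ∈ F k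

lemma Cov.mono {S T : Set (ℕ → ℕ)} (hST : S ⊆ T) (h : Cov r g T) : Cov r g S := by
  obtain ⟨F, h1, h2⟩ := h
  exact ⟨F, h1, fun p hp => h2 p (hST hp)⟩

lemma cov_iUnion {ι : Type*} [Encodable ι] {T : ι → Set (ℕ → ℕ)}
    (h : ∀ i, Cov r g (T i)) : Cov r g (⋃ i, T i) := by
  choose F hF1 hF2 using h
  refine ⟨fun m => (Encodable.decode (α := ι) (Nat.unpair m).1).elim ∅
      (fun i => F i (Nat.unpair m).2), ?_, ?_⟩
  · intro k a ha b hb n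
    have ha' : a ∈ (Encodable.decode (α := ι) (Nat.unpair k).1).elim ∅
        (fun i => F i (Nat.unpair k).2) := ha
    have hb' : b ∈ (Encodable.decode (α := ι) (Nat.unpair k).1).elim ∅
        (fun i => F i (Nat.unpair k).2) := hb
    rcases hdec : (Encodable.decode (α := ι) (Nat.unpair k).1) with _ | i
    · rw [hdec] at ha'; simp at ha'
    · rw [hdec] at ha' hb'
      exact hF1 i _ a ha' b hb' n
  · intro p hp
    obtain ⟨i, hi⟩ := mem_iUnion.1 hp
    obtain ⟨k, hk⟩ := hF2 i p hi
    refine ⟨Nat.pair (Encodable.encode i) k, ?_⟩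
    simp [Nat.unpair_pair, Encodable.encodek]
    exact hk

lemma cov_union {S T : Set (ℕ → ℕ)} (hS : Cov r g S) (hT : Cov r g T) :
    Cov r g (S ∪ T) := by
  rw [Set.union_eq_iUnion]
  exact cov_iUnion r g (fun b => by cases b <;> simpa)

/-- Encodable index for cylinders. -/
abbrev CylIdx : Type := Σ n : ℕ, Fin n → ℕ

def cylOf (σ : CylIdx) : Set (ℕ → ℕ) := {y | ∀ i : Fin σ.1, y i = σ.2 i}

lemma cylinder_eq_cylOf (x : ℕ → ℕ) (n : ℕ) :
    cylinder x n = cylOf ⟨n, fun i => x i⟩ := by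
  ext y
  constructor
  · intro hy i; exact hy i i.2
  · intro hy i hi; exact hy ⟨i, hi⟩

/-- The union of all coverable cylinders is coverable. -/
lemma cov_unionCylinders :
    Cov r g (⋃ σ : CylIdx, ⋃ (_ : Cov r g (cylOf σ)), cylOf σ) := by
  refine cov_iUnion r g (fun σ => ?_)
  by_cases h : Cov r g (cylOf σ)
  · simpa [h] using h
  · refine Cov.mono r g ?_ (⟨fun _ => ∅, by simp, by simp⟩ : Cov r g (∅ : Set (ℕ → ℕ)))
    simp [h]

/-- The "hard core": points none of whose cylinder neighbourhoods is coverable. -/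
def Dset : Set (ℕ → ℕ) := {x | ∀ n, ¬ Cov r g (cylinder x n)}

lemma mem_unionCyl_of_notMemD {x : ℕ → ℕ} (hx : x ∉ Dset r g) :
    x ∈ ⋃ σ : CylIdx, ⋃ (_ : Cov r g (cylOf σ)), cylOf σ := by
  simp only [Dset, mem_setOf_eq, not_forall, not_not] at hx
  obtain ⟨n, hn⟩ := hx
  refine mem_iUnion.2 ⟨⟨n, fun i => x i⟩, ?_⟩
  rw [← cylinder_eq_cylOf]
  exact mem_iUnion.2 ⟨hn, self_mem_cylinder x n⟩

/-- If `x ∈ D`, then inside each cylinder around `x` there are two points of `D`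
whose images are far apart in some coordinate. -/
lemma exists_far_in_D {x : ℕ → ℕ} (hx : x ∈ Dset r g) (n : ℕ) :
    ∃ y ∈ Dset r g ∩ cylinder x n, ∃ z ∈ Dset r g ∩ cylinder x n,
      ∃ m, r < |g y m - g z m| := by
  by_contra hcon
  push_neg at hcon
  apply hx n
  have hcover : cylinder x n ⊆
      (Dset r g ∩ cylinder x n) ∪
        (⋃ σ : CylIdx, ⋃ (_ : Cov r g (cylOf σ)), cylOf σ) := by
    intro p hp
    by_cases hpD : p ∈ Dset r g
    · exact Or.inl ⟨hpD, hp⟩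
    · exact Or.inr (mem_unionCyl_of_notMemD r g hpD)
  refine Cov.mono r g hcover (cov_union r g ?_ (cov_unionCylinders r g))
  refine ⟨fun _ => g '' (Dset r g ∩ cylinder x n), ?_, ?_⟩
  · rintro k a ⟨y, hy, rfl⟩ b ⟨z, hz, rfl⟩ m
    exact hcon y hy z hz m
  · intro p hp
    exact ⟨0, mem_image_of_mem g hp⟩

/-- A pair of cylinders inside `cylinder p.1 p.2`, both meeting `D` at their centers,
of strictly larger depth, whose `g`-images are uniformly `r`-separated. -/
def SplitGood (p : (ℕ → ℕ) × ℕ) (q : ((ℕ → ℕ) × ℕ) × ((ℕ → ℕ) × ℕ)) : Prop :=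
  q.1.1 ∈ Dset r g ∧ q.2.1 ∈ Dset r g ∧ p.2 < q.1.2 ∧ q.2.2 = q.1.2 ∧
  cylinder q.1.1 q.1.2 ⊆ cylinder p.1 p.2 ∧
  cylinder q.2.1 q.2.2 ⊆ cylinder p.1 p.2 ∧
  ∀ u ∈ cylinder q.1.1 q.1.2, ∀ v ∈ cylinder q.2.1 q.2.2, ∃ m, r < |g u m - g v m|

lemma split_exists (hg : Continuous g) (p : (ℕ → ℕ) × ℕ) (hp : p.1 ∈ Dset r g) :
    ∃ q, SplitGood r g p q := by
  obtain ⟨y, ⟨hyD, hycyl⟩, z, ⟨hzD, hzcyl⟩, m, hm⟩ := exists_far_in_D r g hp p.2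
  -- continuity at coordinate m
  set Δ := |g y m - g z m| with hΔ
  have hΔr : r < Δ := hm
  set ε := (Δ - r) / 2 with hε
  have hεpos : 0 < ε := by rw [hε]; linarith
  have hUopen : IsOpen {u : ℕ → ℕ | |g u m - g y m| < ε} := by
    have : Continuous fun u : ℕ → ℕ => |g u m - g y m| :=
      (((continuous_apply m).comp hg).sub continuous_const).abs
    exact isOpen_lt this continuous_const
  have hVopen : IsOpen {u : ℕ → ℕ | |g u m - g z m| < ε} := by
    have : Continuous fun u : ℕ → ℕ => |g u m - g z m| :=
      (((continuous_apply m).comp hg).sub continuous_const).abs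
    exact isOpen_lt this continuous_const
  obtain ⟨U, ⟨xU, nU, rfl⟩, hyU, hUsub⟩ :=
    (isTopologicalBasis_cylinders (fun _ : ℕ => ℕ)).exists_subset_of_mem_open
      (by simp [hεpos] : y ∈ {u : ℕ → ℕ | |g u m - g y m| < ε}) hUopen
  obtain ⟨V, ⟨xV, nV, rfl⟩, hzV, hVsub⟩ :=
    (isTopologicalBasis_cylinders (fun _ : ℕ => ℕ)).exists_subset_of_mem_open
      (by simp [hεpos] : z ∈ {u : ℕ → ℕ | |g u m - g z m| < ε}) hVopen
  set N := max (p.2 + 1) (max nU nV) with hN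
  refine ⟨((y, N), (z, N)), hyD, hzD, ?_, rfl, ?_, ?_, ?_⟩
  · exact lt_of_lt_of_le (Nat.lt_succ_self _) (le_max_left _ _)
  · -- cylinder y N ⊆ cylinder p.1 p.2
    intro u hu i hi
    have h1 : u i = y i := hu i (lt_of_lt_of_le hi
      (le_trans (Nat.le_succ _) (le_max_left _ _)))
    rw [h1]; exact hycyl i hi
  · intro u hu i hi
    have h1 : u i = z i := hu i (lt_of_lt_of_le hi
      (le_trans (Nat.le_succ _) (le_max_left _ _)))
    rw [h1]; exact hzcyl i hi
  · intro u hu v hv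
    have huU : u ∈ cylinder xU nU := by
      have hle : nU ≤ N := le_trans (le_max_left nU nV) (le_max_right (p.2+1) (max nU nV))
      have h1 : u ∈ cylinder y nU := cylinder_anti y hle hu
      rwa [mem_cylinder_iff_eq.1 hyU] at h1
    have hvV : v ∈ cylinder xV nV := by
      have hle : nV ≤ N := le_trans (le_max_right nU nV) (le_max_right (p.2+1) (max nU nV))
      have h1 : v ∈ cylinder z nV := cylinder_anti z hle hv
      rwa [mem_cylinder_iff_eq.1 hzV] at h1
    have hu' : |g u m - g y m| < ε := hUsub huU
    have hv' : |g v m - g z m| < ε := hVsub hvV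
    refine ⟨m, ?_⟩
    have : Δ ≤ |g u m - g v m| + |g u m - g y m| + |g v m - g z m| := by
      rw [hΔ]
      have h1 : g y m - g z m = -(g u m - g y m) + (g u m - g v m) + (g v m - g z m) := by ring
      calc |g y m - g z m| = |(-(g u m - g y m)) + (g u m - g v m) + (g v m - g z m)| := by rw [← h1]
        _ ≤ |(-(g u m - g y m)) + (g u m - g v m)| + |g v m - g z m| := abs_add_le _ _
        _ ≤ |(-(g u m - g y m))| + |g u m - g v m| + |g v m - g z m| := by
            gcongr; exact abs_add_le _ _
        _ = |g u m - g v m| + |g u m - g y m| + |g v m - g z m| := by rw [abs_neg]; ring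
    nlinarith [hu', hv', this]

open Classical in
noncomputable def st (hg : Continuous g) (p : (ℕ → ℕ) × ℕ) :
    ((ℕ → ℕ) × ℕ) × ((ℕ → ℕ) × ℕ) :=
  if h : p.1 ∈ Dset r g then (split_exists r g hg p h).choose else (p, p)

lemma st_spec (hg : Continuous g) (p : (ℕ → ℕ) × ℕ) (hp : p.1 ∈ Dset r g) :
    SplitGood r g p (st r g hg p) := by
  rw [st, dif_pos hp]
  exact (split_exists r g hg p hp).choose_spec

/-- The Cantor scheme: a node for each finite (reversed) branch. -/
noncomputable def A (hg : Continuous g) (x₀ : ℕ → ℕ) : List Bool → (ℕ → ℕ) × ℕ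
  | [] => (x₀, 0)
  | b :: σ => bif b then (st r g hg (A hg x₀ σ)).2 else (st r g hg (A hg x₀ σ)).1

variable {r g} in
lemma A_memD (hg : Continuous g) {x₀ : ℕ → ℕ} (hx₀ : x₀ ∈ Dset r g) :
    ∀ σ : List Bool, (A r g hg x₀ σ).1 ∈ Dset r g := by
  intro σ
  induction σ with
  | nil => exact hx₀
  | cons b σ ih =>
    have hspec := st_spec r g hg (A r g hg x₀ σ) ih
    cases b
    · exact hspec.1
    · exact hspec.2.1

variable {r g} in
lemma A_lt (hg : Continuous g) {x₀ : ℕ → ℕ} (hx₀ : x₀ ∈ Dset r g) (b : Bool)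
    (σ : List Bool) : (A r g hg x₀ σ).2 < (A r g hg x₀ (b :: σ)).2 := by
  have hspec := st_spec r g hg (A r g hg x₀ σ) (A_memD hg hx₀ σ)
  cases b
  · exact hspec.2.2.1
  · show (A r g hg x₀ σ).2 < (st r g hg (A r g hg x₀ σ)).2.2
    rw [hspec.2.2.2.1]; exact hspec.2.2.1

variable {r g} in
lemma A_sub (hg : Continuous g) {x₀ : ℕ → ℕ} (hx₀ : x₀ ∈ Dset r g) (b : Bool)
    (σ : List Bool) :
    cylinder (A r g hg x₀ (b :: σ)).1 (A r g hg x₀ (b :: σ)).2 ⊆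
      cylinder (A r g hg x₀ σ).1 (A r g hg x₀ σ).2 := by
  have hspec := st_spec r g hg (A r g hg x₀ σ) (A_memD hg hx₀ σ)
  cases b
  · exact hspec.2.2.2.2.1
  · exact hspec.2.2.2.2.2.1

variable {r g} in
lemma A_sep (hg : Continuous g) {x₀ : ℕ → ℕ} (hx₀ : x₀ ∈ Dset r g) (σ : List Bool) :
    ∀ u ∈ cylinder (A r g hg x₀ (false :: σ)).1 (A r g hg x₀ (false :: σ)).2,
    ∀ v ∈ cylinder (A r g hg x₀ (true :: σ)).1 (A r g hg x₀ (true :: σ)).2,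
      ∃ m, r < |g u m - g v m| := by
  have hspec := st_spec r g hg (A r g hg x₀ σ) (A_memD hg hx₀ σ)
  exact hspec.2.2.2.2.2.2

/-- The reversed initial segment of a branch. -/
def seg (α : ℕ → Bool) : ℕ → List Bool
  | 0 => []
  | k + 1 => α k :: seg α k

lemma seg_eq_of_agree {α β : ℕ → Bool} : ∀ k, (∀ j < k, α j = β j) → seg α k = seg β k
  | 0, _ => rfl
  | k + 1, h => by
      rw [seg, seg, h k (Nat.lt_succ_self k), seg_eq_of_agree k
        (fun j hj => h j (Nat.lt_succ_of_lt hj))]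

variable {r g} in
lemma A_seg_nested (hg : Continuous g) {x₀ : ℕ → ℕ} (hx₀ : x₀ ∈ Dset r g)
    (α : ℕ → Bool) {k l : ℕ} (hkl : k ≤ l) :
    cylinder (A r g hg x₀ (seg α l)).1 (A r g hg x₀ (seg α l)).2 ⊆
      cylinder (A r g hg x₀ (seg α k)).1 (A r g hg x₀ (seg α k)).2 := by
  induction l with
  | zero => simp_all
  | succ l ih =>
    rcases Nat.lt_or_ge k (l+1) with h | h
    · exact (A_sub hg hx₀ (α l) (seg α l)).trans (ih (Nat.lt_succ_iff.1 h))
    · have : k = l + 1 := le_antisymm hkl h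
      subst this
      exact subset_rfl

variable {r g} in
lemma A_seg_depth (hg : Continuous g) {x₀ : ℕ → ℕ} (hx₀ : x₀ ∈ Dset r g)
    (α : ℕ → Bool) (k : ℕ) : k ≤ (A r g hg x₀ (seg α k)).2 := by
  induction k with
  | zero => exact Nat.zero_le _
  | succ k ih => exact Nat.succ_le_of_lt (lt_of_le_of_lt ih (A_lt hg hx₀ (α k) (seg α k)))

/-- The limit point of a branch. -/
noncomputable def limP (hg : Continuous g) (x₀ : ℕ → ℕ) (α : ℕ → Bool) : ℕ → ℕ :=
  fun i => (A r g hg x₀ (seg α (i + 1))).1 i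

variable {r g} in
lemma limP_mem (hg : Continuous g) {x₀ : ℕ → ℕ} (hx₀ : x₀ ∈ Dset r g)
    (α : ℕ → Bool) (k : ℕ) :
    limP r g hg x₀ α ∈ cylinder (A r g hg x₀ (seg α k)).1 (A r g hg x₀ (seg α k)).2 := by
  intro i hi
  show (A r g hg x₀ (seg α (i + 1))).1 i = (A r g hg x₀ (seg α k)).1 i
  rcases Nat.lt_or_ge i k with h | h
  · -- i + 1 ≤ k
    have hmem : (A r g hg x₀ (seg α k)).1 ∈
        cylinder (A r g hg x₀ (seg α (i+1))).1 (A r g hg x₀ (seg α (i+1))).2 :=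
      A_seg_nested hg hx₀ α h (self_mem_cylinder _ _)
    have hidep : i < (A r g hg x₀ (seg α (i+1))).2 :=
      lt_of_lt_of_le (Nat.lt_succ_self i) (A_seg_depth hg hx₀ α (i+1))
    exact (hmem i hidep).symm
  · -- k ≤ i
    have hmem : (A r g hg x₀ (seg α (i+1))).1 ∈
        cylinder (A r g hg x₀ (seg α k)).1 (A r g hg x₀ (seg α k)).2 :=
      A_seg_nested hg hx₀ α (le_trans h (Nat.le_succ i)) (self_mem_cylinder _ _)
    exact hmem i hi

variable {r g} in
lemma limP_sep (hg : Continuous g) {x₀ : ℕ → ℕ} (hx₀ : x₀ ∈ Dset r g)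
    {α β : ℕ → Bool} (hαβ : α ≠ β) :
    ∃ m, r < |g (limP r g hg x₀ α) m - g (limP r g hg x₀ β) m| := by
  have hx : ∃ k, α k ≠ β k := by
    by_contra h
    push_neg at h
    exact hαβ (funext h)
  classical
  let k := Nat.find hx
  have hk : α k ≠ β k := Nat.find_spec hx
  have hagree : ∀ j < k, α j = β j := fun j hj => by
    by_contra hne
    exact Nat.find_min hx hj hne
  have hseg : seg α k = seg β k := seg_eq_of_agree k hagree
  have hmemα := limP_mem hg hx₀ α (k+1)
  have hmemβ := limP_mem hg hx₀ β (k+1)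
  rw [show seg β (k+1) = β k :: seg α k by rw [seg, hseg]] at hmemβ
  rw [show seg α (k+1) = α k :: seg α k from rfl] at hmemα
  cases hα : α k with
  | false =>
    have hβ : β k = true := by
      cases hβ : β k
      · exact absurd (hα.trans hβ.symm) hk
      · rfl
    rw [hα] at hmemα
    rw [hβ] at hmemβ
    exact A_sep hg hx₀ (seg α k) _ hmemα _ hmemβ
  | true =>
    have hβ : β k = false := by
      cases hβ : β k
      · rfl
      · exact absurd (hα.trans hβ.symm) hk
    rw [hα] at hmemα
    rw [hβ] at hmemβ
    obtain ⟨m, hm⟩ := A_sep hg hx₀ (seg α k) _ hmemβ _ hmemα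
    exact ⟨m, by rwa [abs_sub_comm]⟩

/-- The key dichotomy lemma. -/
lemma key (Y : Set Linfty) {g : (ℕ → ℕ) → (ℕ → ℝ)} (hg : Continuous g)
    (hrange : Set.range g = (fun y : Linfty => (fun n : ℕ => y n)) '' Y)
    {r : ℝ} (hr : 0 < r) :
    (∃ N ⊆ Y, ¬N.Countable ∧ ∀ x ∈ N, ∀ y ∈ N, x ≠ y → r < ‖x - y‖) ∨
    (∃ f : ℕ → Set Linfty, (⋃ n, f n) = Y ∧ ∀ n, Metric.diam (f n) ≤ r) := by
  by_cases hD : (Dset r g).Nonempty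
  · -- there is a hard core: build an uncountable separated family from branches
    obtain ⟨x₀, hx₀⟩ := hD
    have hmemrange : ∀ α : ℕ → Bool, ∃ y, y ∈ Y ∧
        (fun n : ℕ => y n) = g (limP r g hg x₀ α) := by
      intro α
      have h1 : g (limP r g hg x₀ α) ∈ Set.range g := ⟨_, rfl⟩
      rw [hrange] at h1
      obtain ⟨y, hy, heq⟩ := h1
      exact ⟨y, hy, heq⟩
    choose φ hφY hφeq using hmemrange
    have hsep : ∀ α β, α ≠ β → ∃ m, r < |φ α m - φ β m| := by
      intro α β hne
      obtain ⟨m, hm⟩ := limP_sep hg hx₀ hne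
      refine ⟨m, ?_⟩
      have h1 : φ α m = g (limP r g hg x₀ α) m := congrFun (hφeq α) m
      have h2 : φ β m = g (limP r g hg x₀ β) m := congrFun (hφeq β) m
      rw [h1, h2]
      exact hm
    have hinj : Function.Injective φ := by
      intro α β h
      by_contra hne
      obtain ⟨m, hm⟩ := hsep α β hne
      rw [h, sub_self, abs_zero] at hm
      linarith
    refine Or.inl ⟨Set.range φ, ?_, ?_, ?_⟩
    · rintro _ ⟨α, rfl⟩
      exact hφY α
    · intro hc
      haveI := hc.to_subtype
      exact not_countable_funBool (Countable.of_equiv _ (Equiv.ofInjective φ hinj).symm)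
    · rintro _ ⟨α, rfl⟩ _ ⟨β, rfl⟩ hne
      have hαβ : α ≠ β := fun h => hne (by rw [h])
      obtain ⟨m, hm⟩ := hsep α β hαβ
      calc r < |φ α m - φ β m| := hm
        _ = ‖(φ α - φ β) m‖ := by simp [Real.norm_eq_abs]
        _ ≤ ‖φ α - φ β‖ := lp.norm_apply_le_norm (by norm_num) _ m
  · -- no hard core: everything is coverable
    have hnotD : ∀ p : ℕ → ℕ, p ∉ Dset r g := fun p hp => hD ⟨p, hp⟩
    have hcovuniv : Cov r g Set.univ := by
      refine Cov.mono r g ?_ (cov_unionCylinders r g)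
      intro p _
      exact mem_unionCyl_of_notMemD r g (hnotD p)
    obtain ⟨F, hF1, hF2⟩ := hcovuniv
    refine Or.inr ⟨fun k => {y ∈ Y | (fun n : ℕ => y n) ∈ F k}, ?_, ?_⟩
    · ext y
      simp only [Set.mem_iUnion, Set.mem_setOf_eq]
      constructor
      · rintro ⟨k, hk, _⟩
        exact hk
      · intro hy
        have h1 : (fun n : ℕ => y n) ∈ Set.range g := by
          rw [hrange]; exact ⟨y, hy, rfl⟩
        obtain ⟨p, hp⟩ := h1
        obtain ⟨k, hk⟩ := hF2 p (Set.mem_univ p)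
        rw [hp] at hk
        exact ⟨k, hy, hk⟩
    · intro k
      refine Metric.diam_le_of_forall_dist_le hr.le ?_
      rintro u ⟨huY, huF⟩ v ⟨hvY, hvF⟩
      rw [dist_eq_norm]
      refine lp.norm_le_of_forall_le hr.le ?_
      intro i
      have h1 := hF1 k _ huF _ hvF i
      simpa [Real.norm_eq_abs] using h1

end Stmt12Aux

set_option synthInstance.maxHeartbeats 1000000 in
set_option maxHeartbeats 1000000 in
theorem stmt12 (X : Submodule ℝ Linfty) (hX : IsClosed (X : Set Linfty)) :
    (∀ Y : Set Linfty, Y ⊆ (X : Set Linfty) →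
        MeasureTheory.AnalyticSet ((fun y : Linfty => (fun n : ℕ => y n)) '' Y) →
        Dichotomous Y) ∧
    (MeasureTheory.AnalyticSet
        ((fun y : Linfty => (fun n : ℕ => y n)) '' (X : Set Linfty)) →
      Dichotomous {x : Linfty | x ∈ X ∧ ‖x‖ = 1}) := by
  have main : ∀ Y : Set Linfty,
      MeasureTheory.AnalyticSet ((fun y : Linfty => (fun n : ℕ => y n)) '' Y) →
      Dichotomous Y := by
    intro Y hA r hr _
    rw [MeasureTheory.AnalyticSet] at hA
    rcases hA with hA | ⟨g, hg, hrange⟩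
    · right
      have hY : Y = ∅ := by rwa [Set.image_eq_empty] at hA
      exact ⟨fun _ => ∅, by simp [hY], fun _ => by simp [hr.le]⟩
    · exact Stmt12Aux.key Y hg hrange hr
  refine ⟨fun Y _ hA => main Y hA, fun hA => main _ ?_⟩
  have himg : (fun y : Linfty => (fun n : ℕ => y n)) '' {x : Linfty | x ∈ X ∧ ‖x‖ = 1} =
      ((fun y : Linfty => (fun n : ℕ => y n)) '' (X : Set Linfty)) ∩
        ({a : ℕ → ℝ | ∀ n, |a n| ≤ 1} ∩
          ⋂ k : ℕ, ⋃ n, {a : ℕ → ℝ | 1 - 1/((k:ℝ)+1) < |a n|}) := by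
    ext a
    constructor
    · rintro ⟨x, ⟨hxX, hx1⟩, rfl⟩
      refine ⟨⟨x, hxX, rfl⟩, ?_, ?_⟩
      · intro n
        have h1 := lp.norm_apply_le_norm (by norm_num : (∞ : ℝ≥0∞) ≠ 0) x n
        rw [hx1] at h1
        simpa [Real.norm_eq_abs] using h1
      · refine Set.mem_iInter.2 fun k => ?_
        by_contra hcon
        simp only [Set.mem_iUnion, not_exists, Set.mem_setOf_eq, not_lt] at hcon
        have hknn : (0:ℝ) < 1/((k:ℝ)+1) := by positivity
        have hknn2 : (1:ℝ)/((k:ℝ)+1) ≤ 1 := by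
          rw [div_le_one (by positivity)]
          simp
        have hle : ‖x‖ ≤ 1 - 1/((k:ℝ)+1) :=
          lp.norm_le_of_forall_le (by linarith) fun i => by
            simpa [Real.norm_eq_abs] using hcon i
        rw [hx1] at hle
        linarith
    · rintro ⟨⟨x, hxX, rfl⟩, h1, h2⟩
      refine ⟨x, ⟨hxX, ?_⟩, rfl⟩
      have hub : ‖x‖ ≤ 1 :=
        lp.norm_le_of_forall_le zero_le_one fun i => by
          simpa [Real.norm_eq_abs] using h1 i
      have hlb : (1:ℝ) ≤ ‖x‖ := by
        by_contra hcon
        push_neg at hcon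
        obtain ⟨k, hk⟩ := exists_nat_one_div_lt (by linarith : (0:ℝ) < 1 - ‖x‖)
        have h3 := Set.mem_iInter.1 h2 k
        obtain ⟨n, hn⟩ := Set.mem_iUnion.1 h3
        have h4 : |x n| ≤ ‖x‖ := by
          simpa [Real.norm_eq_abs] using
            lp.norm_apply_le_norm (by norm_num : (∞ : ℝ≥0∞) ≠ 0) x n
        simp only [Set.mem_setOf_eq] at hn
        linarith
      linarith
  rw [himg]
  have hB : MeasurableSet ({a : ℕ → ℝ | ∀ n, |a n| ≤ 1} ∩
      ⋂ k : ℕ, ⋃ n, {a : ℕ → ℝ | 1 - 1/((k:ℝ)+1) < |a n|}) := by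
    apply MeasurableSet.inter
    · rw [Set.setOf_forall]
      exact MeasurableSet.iInter fun n =>
        measurableSet_le (measurable_pi_apply n).abs measurable_const
    · exact MeasurableSet.iInter fun k => MeasurableSet.iUnion fun n =>
        measurableSet_lt measurable_const (measurable_pi_apply n).abs
  rw [Set.inter_eq_iInter]
  refine MeasureTheory.AnalyticSet.iInter fun b => ?_
  cases b
  · exact hB.analyticSet
  · exact hA
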